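/- Suppose (A_i) is an increasing sequence of subsets of ℕ each having asymptotic density, such that ν(A_i) converges to L, and suppose A ⊆ ℕ satisfies ν⁺(A_i △ A ∩ (A_i ∪ A)) → 0, i.e., d(A_i, A) → 0 where d(A,B) = ν⁺(A △ B). Then A has asymptotic density and ν(A) = L. -/

import Mathlib

open Filter
open scoped symmDiff Classical

noncomputable def densSeq (A : Set ℕ) (n : ℕ) : ℝ :=
  ((Finset.range n).filter (· ∈ A)).card / (n : ℝ)

noncomputable def nuPlus (A : Set ℕ) : ℝ :=
  Filter.atTop.limsup (densSeq A)

noncomputable def nuMinus (A : Set ℕ) : ℝ :=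
  Filter.atTop.liminf (densSeq A)

lemma densSeq_nonneg (A : Set ℕ) (n : ℕ) : 0 ≤ densSeq A n := by
  unfold densSeq; positivity

lemma densSeq_le_one (A : Set ℕ) (n : ℕ) : densSeq A n ≤ 1 := by
  unfold densSeq
  rcases Nat.eq_zero_or_pos n with rfl | hn
  · simp
  · rw [div_le_one (by exact_mod_cast hn)]
    exact_mod_cast (Finset.card_filter_le _ _).trans_eq (Finset.card_range n)

lemma densSeq_tri (A B : Set ℕ) (n : ℕ) :
    densSeq B n ≤ densSeq A n + densSeq (A ∆ B) n := by
  unfold densSeq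
  rw [← add_div]
  have hsub : (Finset.range n).filter (· ∈ B) ⊆
      (Finset.range n).filter (· ∈ A) ∪ (Finset.range n).filter (· ∈ A ∆ B) := by
    intro x hx
    simp only [Finset.mem_filter, Finset.mem_union, Set.mem_symmDiff] at *
    by_cases hA : x ∈ A <;> tauto
  have hcard : (((Finset.range n).filter (· ∈ B)).card : ℝ) ≤
      (((Finset.range n).filter (· ∈ A)).card : ℝ)
        + (((Finset.range n).filter (· ∈ A ∆ B)).card : ℝ) := by
    exact_mod_cast (Finset.card_le_card hsub).trans (Finset.card_union_le _ _)
  gcongr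

lemma densSeq_bddAbove (A : Set ℕ) : IsBoundedUnder (· ≤ ·) atTop (densSeq A) :=
  isBoundedUnder_of ⟨1, fun n => densSeq_le_one A n⟩

lemma densSeq_bddBelow (A : Set ℕ) : IsBoundedUnder (· ≥ ·) atTop (densSeq A) :=
  isBoundedUnder_of ⟨0, fun n => densSeq_nonneg A n⟩

theorem density_of_limit (A : ℕ → Set ℕ) (B : Set ℕ) (ν : ℕ → ℝ) (L : ℝ)
    (hmono : Monotone A)
    (hdens : ∀ i, Tendsto (densSeq (A i)) atTop (nhds (ν i)))
    (hν : Tendsto ν atTop (nhds L))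
    (hlim : Tendsto (fun i => nuPlus (A i ∆ B)) atTop (nhds 0)) :
    Tendsto (densSeq B) atTop (nhds L) := by
  have hcoB := (densSeq_bddBelow B).isCoboundedUnder_le
  have hcoB' := (densSeq_bddAbove B).isCoboundedUnder_ge
  -- upper bound on limsup for each i
  have hup : ∀ i, limsup (densSeq B) atTop ≤ ν i + nuPlus (A i ∆ B) := by
    intro i
    have hb : IsBoundedUnder (· ≤ ·) atTop (densSeq (A i) + densSeq (A i ∆ B)) :=
      isBoundedUnder_of ⟨2, fun n => by
        have := densSeq_le_one (A i) n
        have := densSeq_le_one (A i ∆ B) n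
        simp only [Pi.add_apply]; linarith⟩
    have h1 : limsup (densSeq B) atTop ≤
        limsup (densSeq (A i) + densSeq (A i ∆ B)) atTop :=
      limsup_le_limsup (Eventually.of_forall (densSeq_tri (A i) B)) hcoB hb
    have h2 : limsup (densSeq (A i) + densSeq (A i ∆ B)) atTop ≤
        limsup (densSeq (A i)) atTop + limsup (densSeq (A i ∆ B)) atTop :=
      limsup_add_le (densSeq_bddBelow _) (densSeq_bddAbove _)
        (densSeq_bddBelow _).isCoboundedUnder_le (densSeq_bddAbove _)
    rw [(hdens i).limsup_eq] at h2
    exact h1.trans h2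
  -- lower bound on liminf for each i
  have hdown : ∀ i, ν i - nuPlus (A i ∆ B) ≤ liminf (densSeq B) atTop := by
    intro i
    have hb : IsBoundedUnder (· ≤ ·) atTop (densSeq (A i ∆ B) + densSeq B) :=
      isBoundedUnder_of ⟨2, fun n => by
        have := densSeq_le_one B n
        have := densSeq_le_one (A i ∆ B) n
        simp only [Pi.add_apply]; linarith⟩
    have h1 : liminf (densSeq (A i)) atTop ≤
        liminf (densSeq (A i ∆ B) + densSeq B) atTop := by
      refine liminf_le_liminf (Eventually.of_forall fun n => ?_) (densSeq_bddBelow _)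
        hb.isCoboundedUnder_ge
      have := densSeq_tri B (A i) n
      rw [symmDiff_comm] at this
      simpa [Pi.add_apply, add_comm] using this
    have h2 : liminf (densSeq (A i ∆ B) + densSeq B) atTop ≤
        limsup (densSeq (A i ∆ B)) atTop + liminf (densSeq B) atTop :=
      liminf_add_le (densSeq_bddBelow _) (densSeq_bddAbove _)
        (densSeq_bddBelow _) hcoB'
    rw [(hdens i).liminf_eq] at h1
    have h3 := h1.trans h2
    have h4 : nuPlus (A i ∆ B) = limsup (densSeq (A i ∆ B)) atTop := rfl
    linarith
  have hL1 : limsup (densSeq B) atTop ≤ L :=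
    ge_of_tendsto (by simpa using hν.add hlim) (Eventually.of_forall hup)
  have hL2 : L ≤ liminf (densSeq B) atTop :=
    le_of_tendsto (by simpa using hν.sub hlim) (Eventually.of_forall hdown)
  exact tendsto_of_le_liminf_of_limsup_le hL2 hL1 (densSeq_bddAbove B) (densSeq_bddBelow B)
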